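/- Let R be a finite commutative chain ring, V a free R-module of rank a, and W a submodule of V of rank b. For any integer u with b ≤ u ≤ a, there exists a free R-submodule F of V of rank u such that W ⊆ F. -/

import Mathlib

open IsLocalRing

/-- The rank of a submodule `N`: the smallest number of elements generating `N`. -/
noncomputable def subrank {R M : Type*} [Semiring R] [AddCommMonoid M] [Module R M]
    (N : Submodule R M) : ℕ :=
  sInf {k | ∃ f : Fin k → M, Submodule.span R (Set.range f) = N}

/-- The rank of a vector `u ∈ S^n` over `R`: the smallest number of generators of the
`R`-submodule of `S` generated by the coordinates of `u` (i.e. of the support of `u`). -/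
noncomputable def vecrank (R : Type*) {S : Type*} {n : ℕ} [Semiring R] [AddCommMonoid S]
    [Module R S] (u : Fin n → S) : ℕ :=
  subrank (Submodule.span R (Set.range u))

/-- The minimum rank distance of a linear code `C ⊆ S^n`, ranks being taken over `K`. -/
noncomputable def minrkdist (K : Type*) {S : Type*} {n : ℕ} [Semiring K] [Ring S]
    [Module K S] (C : Submodule S (Fin n → S)) : ℕ :=
  sInf {d | ∃ u ∈ C, ∃ v ∈ C, u ≠ v ∧ vecrank K (u - v) = d}

open Submodule Set IsLocalRing

section aux
variable {R : Type*} [CommRing R]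

lemma smul_top_pi (n : Type*) [Fintype n] [DecidableEq n] (I : Ideal R) :
    (I • ⊤ : Submodule R (n → R)) = Submodule.pi Set.univ (fun _ => I) := by
  apply le_antisymm
  · refine Submodule.smul_le.2 fun r hr x _ => ?_
    refine Submodule.mem_pi.2 fun i _ => ?_
    exact Ideal.mul_mem_right _ _ hr
  · intro x hx
    have hx' : x = ∑ i, x i • (Pi.single i (1 : R) : n → R) := by
      simp [← Pi.single_smul, Finset.univ_sum_single]
    rw [hx']
    exact Submodule.sum_mem _ fun i _ =>
      Submodule.smul_mem_smul (Submodule.mem_pi.1 hx i (Set.mem_univ i)) trivial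

lemma mem_smul_top_pi {n : Type*} [Fintype n] [DecidableEq n] {I : Ideal R} {x : n → R} :
    x ∈ (I • ⊤ : Submodule R (n → R)) ↔ ∀ i, x i ∈ I := by
  rw [smul_top_pi]
  exact ⟨fun h i => Submodule.mem_pi.1 h i trivial, fun h => Submodule.mem_pi.2 fun i _ => h i⟩


/-- linear automorphism of `n → R` sending `single j 1` to `w`, given `w j` is a unit -/
noncomputable def pivEquiv {n : Type*} [Fintype n] [DecidableEq n] (j : n) (w : n → R)
    (t : R) (ht : t * w j = 1) : (n → R) ≃ₗ[R] (n → R) :=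
  LinearEquiv.ofLinear
    (LinearMap.id + (LinearMap.proj j).smulRight (w - Pi.single j 1))
    (LinearMap.id - (t • (LinearMap.proj j : (n → R) →ₗ[R] R)).smulRight (w - Pi.single j 1))
    (by
      apply LinearMap.ext
      intro x
      funext i
      simp only [LinearMap.coe_comp, Function.comp_apply, LinearMap.add_apply, LinearMap.sub_apply,
        LinearMap.id_apply, LinearMap.smulRight_apply, LinearMap.proj_apply, LinearMap.smul_apply,
        Pi.add_apply, Pi.sub_apply, Pi.smul_apply, smul_eq_mul]
      by_cases h : i = j
      · subst h
        simp only [Pi.single_eq_same]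
        linear_combination (x i - x i * w i) * ht
      · simp only [Pi.single_eq_of_ne h, Pi.single_eq_same]
        linear_combination (-(x j * w i)) * ht)
    (by
      apply LinearMap.ext
      intro x
      funext i
      simp only [LinearMap.coe_comp, Function.comp_apply, LinearMap.add_apply, LinearMap.sub_apply,
        LinearMap.id_apply, LinearMap.smulRight_apply, LinearMap.proj_apply, LinearMap.smul_apply,
        Pi.add_apply, Pi.sub_apply, Pi.smul_apply, smul_eq_mul]
      by_cases h : i = j
      · subst h
        simp only [Pi.single_eq_same]
        linear_combination (x i - x i * w i) * ht
      · simp only [Pi.single_eq_of_ne h, Pi.single_eq_same]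
        linear_combination (-(x j * w i)) * ht)

end aux

section aux2
variable {R : Type*} [CommRing R] {n : Type} [Fintype n] [DecidableEq n]

lemma pivEquiv_apply (j : n) (w : n → R) (t : R) (ht : t * w j = 1) (x : n → R) :
    pivEquiv j w t ht x = x + x j • (w - Pi.single j 1) := rfl

lemma pivEquiv_single (j : n) (w : n → R) (t : R) (ht : t * w j = 1) :
    pivEquiv j w t ht (Pi.single j 1) = w := by
  funext i
  rw [pivEquiv_apply]
  by_cases h : i = j
  · subst h
    simp
  · simp [Pi.single_eq_of_ne h]

/-- the coordinatewise-extension-by-zero map -/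
noncomputable def extZero (j : n) : ({i : n // i ≠ j} → R) →ₗ[R] (n → R) :=
  LinearMap.pi (fun i => if h : i ≠ j then (LinearMap.proj ⟨i, h⟩ :
    ({i : n // i ≠ j} → R) →ₗ[R] R) else 0)

lemma extZero_apply (j : n) (x : {i : n // i ≠ j} → R) (i : n) :
    extZero j x i = if h : i ≠ j then x ⟨i, h⟩ else 0 := by
  simp only [extZero, LinearMap.pi_apply]
  by_cases h : i ≠ j <;> simp [h]

lemma extZero_apply_ne (j : n) (x : {i : n // i ≠ j} → R) {i : n} (h : i ≠ j) :
    extZero j x i = x ⟨i, h⟩ := by simp [extZero_apply, h]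

lemma extZero_apply_self (j : n) (x : {i : n // i ≠ j} → R) :
    extZero j x j = 0 := by simp [extZero_apply]

/-- restriction to coordinates `≠ j` -/
noncomputable def restr (j : n) : (n → R) →ₗ[R] ({i : n // i ≠ j} → R) :=
  LinearMap.funLeft R R Subtype.val

lemma restr_apply (j : n) (x : n → R) (i : {i : n // i ≠ j}) : restr j x i = x i := rfl

lemma extZero_restr (j : n) (x : n → R) (hx : x j = 0) : extZero j (restr j x) = x := by
  funext i
  by_cases h : i = j
  · subst h; simp [extZero_apply_self, hx]
  · rw [extZero_apply_ne j _ h, restr_apply]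

end aux2

section aux3
variable {R : Type*} [CommRing R] {n : Type} [Fintype n] [DecidableEq n]

/-- split `n → R` as (coordinates `≠ j`) × (coordinate `j`) -/
noncomputable def splitEquiv (j : n) : ((({i : n // i ≠ j}) → R) × R) ≃ₗ[R] (n → R) :=
  LinearEquiv.ofLinear
    ((extZero j).comp (LinearMap.fst R _ R) + (LinearMap.snd R _ R).smulRight (Pi.single j 1))
    (LinearMap.prod (restr j) (LinearMap.proj j))
    (by
      apply LinearMap.ext
      intro x
      funext i
      simp only [LinearMap.coe_comp, Function.comp_apply, LinearMap.add_apply,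
        LinearMap.prod_apply, Function.prod, LinearMap.fst_apply, LinearMap.snd_apply,
        LinearMap.smulRight_apply, LinearMap.proj_apply, Pi.add_apply, Pi.smul_apply,
        smul_eq_mul, LinearMap.id_apply]
      by_cases h : i = j
      · subst h
        simp [extZero_apply_self]
      · rw [extZero_apply_ne j _ h, restr_apply, Pi.single_eq_of_ne h]
        ring)
    (by
      apply LinearMap.ext
      rintro ⟨x, r⟩
      apply Prod.ext
      · funext i'
        simp only [LinearMap.coe_comp, Function.comp_apply, LinearMap.add_apply,
          LinearMap.prod_apply, Function.prod, LinearMap.fst_apply, LinearMap.snd_apply,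
          LinearMap.smulRight_apply, LinearMap.id_apply]
        rw [restr_apply]
        simp only [Pi.add_apply, Pi.smul_apply, smul_eq_mul]
        rw [extZero_apply_ne j _ i'.2, Pi.single_eq_of_ne i'.2]
        simp
      · simp only [LinearMap.coe_comp, Function.comp_apply, LinearMap.add_apply,
          LinearMap.prod_apply, Function.prod, LinearMap.fst_apply, LinearMap.snd_apply,
          LinearMap.smulRight_apply, LinearMap.proj_apply, LinearMap.id_apply,
          Pi.add_apply, Pi.smul_apply, smul_eq_mul]
        rw [extZero_apply_self]
        simp)

lemma splitEquiv_apply_fst (j : n) (x : {i : n // i ≠ j} → R) :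
    splitEquiv j (x, 0) = extZero j x := by
  show (extZero j) x + (0 : R) • (Pi.single j 1 : n → R) = extZero j x
  simp

lemma splitEquiv_apply_snd (j : n) (r : R) :
    splitEquiv j (0, r) = r • (Pi.single j 1 : n → R) := by
  show (extZero j) 0 + r • (Pi.single j 1 : n → R) = r • (Pi.single j 1 : n → R)
  simp

end aux3

section helpers
variable {R : Type*} [CommRing R] {M M' : Type*} [AddCommGroup M] [Module R M]
  [AddCommGroup M'] [Module R M']

lemma map_map_symm (e : M ≃ₗ[R] M') (N : Submodule R M) :
    (N.map (e : M →ₗ[R] M')).map (e.symm : M' →ₗ[R] M) = N := by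
  ext x
  constructor
  · rintro ⟨y, ⟨z, hz, rfl⟩, rfl⟩; simpa using hz
  · intro hx; exact ⟨e x, ⟨x, hx, rfl⟩, by simp⟩

lemma span_range_comp_equiv (e : M ≃ₗ[R] M') {ι : Type*} (f : ι → M) (N : Submodule R M)
    (h : Submodule.span R (Set.range f) = N) :
    Submodule.span R (Set.range (⇑e ∘ f)) = N.map (e : M →ₗ[R] M') := by
  rw [← h, Set.range_comp, Submodule.map_span]
  rfl

lemma subrank_map_equiv (e : M ≃ₗ[R] M') (N : Submodule R M) :
    subrank (N.map (e : M →ₗ[R] M')) = subrank N := by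
  unfold subrank
  congr 1
  ext k
  constructor
  · rintro ⟨f, hf⟩
    refine ⟨⇑e.symm ∘ f, ?_⟩
    have := span_range_comp_equiv e.symm f _ hf
    rwa [map_map_symm] at this
  · rintro ⟨f, hf⟩
    exact ⟨⇑e ∘ f, span_range_comp_equiv e f N hf⟩

lemma subrank_eq_card_of_basis [Finite R] [Nontrivial R] {ι : Type*} [Fintype ι]
    (N : Submodule R M) (B : Module.Basis ι R ↥N) : subrank N = Fintype.card ι := by
  have hfinN : Finite ↥N := Finite.of_equiv _ B.equivFun.toEquiv.symm
  have hcardN : Nat.card ↥N = Nat.card R ^ Fintype.card ι := by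
    rw [Nat.card_congr B.equivFun.toEquiv, Nat.card_fun]
    simp
  have hspan : Submodule.span R (Set.range (⇑N.subtype ∘ ⇑B ∘ ⇑(Fintype.equivFin ι).symm)) = N := by
    rw [Set.range_comp, Set.range_comp, Set.range_eq_univ.2 (Fintype.equivFin ι).symm.surjective,
      Set.image_univ, ← Set.range_comp, Set.range_comp (⇑N.subtype), ← Submodule.map_span,
      B.span_eq, Submodule.map_top, Submodule.range_subtype]
  apply le_antisymm
  · exact Nat.sInf_le ⟨_, hspan⟩
  · refine le_csInf ⟨Fintype.card ι, _, hspan⟩ ?_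
    rintro k ⟨f, hf⟩
    have hmem : ∀ x : Fin k → R, ∑ i, x i • f i ∈ N := by
      intro x
      rw [← hf]
      exact Submodule.sum_mem _ fun i _ =>
        Submodule.smul_mem _ _ (Submodule.subset_span (Set.mem_range_self i))
    set φ : (Fin k → R) → ↥N := fun x => ⟨∑ i, x i • f i, hmem x⟩ with hφ
    have hsurj : Function.Surjective φ := by
      rintro ⟨v, hv⟩
      rw [← hf] at hv
      obtain ⟨c, hc⟩ := (mem_span_range_iff_exists_fun R).1 hv
      exact ⟨c, Subtype.ext hc⟩
    have hle := Nat.card_le_card_of_surjective φ hsurj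
    rw [hcardN, Nat.card_fun, Nat.card_eq_fintype_card (α := Fin k), Fintype.card_fin] at hle
    have h1 : 1 < Nat.card R := by
      have : Fintype R := Fintype.ofFinite R
      rw [Nat.card_eq_fintype_card]
      exact Fintype.one_lt_card_iff_nontrivial.2 ‹_›
    exact (Nat.pow_le_pow_iff_right h1).1 hle

end helpers
section sub


section big

open Submodule in
lemma smith_aux (R : Type*) [CommRing R] [Finite R] [IsLocalRing R] [IsPrincipalIdealRing R] :
    ∀ (N : ℕ) (n : Type) [Fintype n] [DecidableEq n], Fintype.card n = N →
    ∀ (W : Submodule R (n → R)) (κ : Type) [Fintype κ] (f : κ → (n → R)),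
      Submodule.span R (Set.range f) = W →
      ∃ (g : Module.Basis n R (n → R)) (c : n → R) (T : Finset n),
        W = Submodule.span R (Set.range fun i => c i • g i) ∧
        (∀ i ∉ T, c i = 0) ∧ T.card ≤ Fintype.card κ := by
  intro N
  induction N with
  | zero =>
    intro n _ _ hn W κ _ f hf
    haveI : IsEmpty n := Fintype.card_eq_zero_iff.1 hn
    haveI : Subsingleton (n → R) := ⟨fun a b => funext fun i => isEmptyElim i⟩
    refine ⟨Module.Basis.empty _, 0, ∅, ?_, fun i _ => rfl, by simp⟩
    ext x
    rw [Subsingleton.elim x 0]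
    simp
  | succ N IH =>
    intro n _ _ hn W κ _ f hf
    classical
    by_cases hW : W = ⊥
    · refine ⟨Pi.basisFun R n, 0, ∅, ?_, fun i _ => rfl, by simp⟩
      simp only [Pi.zero_apply, zero_smul]
      apply le_antisymm (hW ▸ bot_le)
      exact Submodule.span_le.2 (by rintro _ ⟨i, rfl⟩; exact W.zero_mem)
    · obtain ⟨π, hπ⟩ := (IsPrincipalIdealRing.principal (IsLocalRing.maximalIdeal R)).principal
      have hmpow : ∀ k : ℕ, IsLocalRing.maximalIdeal R ^ k = Ideal.span {π ^ k} := fun k => by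
        rw [hπ, Ideal.submodule_span_eq, Ideal.span_singleton_pow]
      have hnil : IsNilpotent (IsLocalRing.maximalIdeal R) := by
        rw [← IsLocalRing.jacobson_eq_maximalIdeal (⊥ : Ideal R) bot_ne_top]
        exact IsArtinianRing.isNilpotent_jacobson_bot
      obtain ⟨e, he⟩ := hnil
      have hex : ∃ t, ¬ W ≤ (IsLocalRing.maximalIdeal R ^ t • ⊤ : Submodule R (n → R)) := by
        refine ⟨e, ?_⟩
        rw [he, Ideal.zero_eq_bot, Submodule.bot_smul]
        simpa [le_bot_iff] using hW
      have ht0 : W ≤ (IsLocalRing.maximalIdeal R ^ 0 • ⊤ : Submodule R (n → R)) := by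
        rw [pow_zero, Ideal.one_eq_top, Submodule.top_smul]
        exact le_top
      have httpos : 0 < Nat.find hex :=
        Nat.pos_of_ne_zero (fun h0 => (h0 ▸ Nat.find_spec hex) ht0)
      set s := Nat.find hex - 1 with hs
      have hWs : W ≤ (IsLocalRing.maximalIdeal R ^ s • ⊤ : Submodule R (n → R)) :=
        not_not.1 (Nat.find_min hex (by omega))
      have hWs1 : ¬ W ≤ (IsLocalRing.maximalIdeal R ^ (s+1) • ⊤ : Submodule R (n → R)) := by
        have h1 : s + 1 = Nat.find hex := by omega
        rw [h1]; exact Nat.find_spec hex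
      have hex2 : ∃ i₀ : κ, f i₀ ∉ (IsLocalRing.maximalIdeal R ^ (s+1) • ⊤ : Submodule R (n → R)) := by
        by_contra h
        push_neg at h
        exact hWs1 (hf ▸ Submodule.span_le.2 (by rintro _ ⟨i, rfl⟩; exact h i))
      obtain ⟨i₀, hi₀⟩ := hex2
      set w := f i₀ with hwdef
      have hwW : w ∈ W := hf ▸ Submodule.subset_span (Set.mem_range_self i₀)
      have hwms : ∀ i, w i ∈ Ideal.span {π ^ s} := fun i =>
        (hmpow s) ▸ mem_smul_top_pi.1 (hWs hwW) i
      choose r hr using fun i => Ideal.mem_span_singleton'.1 (hwms i)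
      have hexj : ∃ j, w j ∉ IsLocalRing.maximalIdeal R ^ (s+1) := by
        by_contra h; push_neg at h; exact hi₀ (mem_smul_top_pi.2 h)
      obtain ⟨j, hj⟩ := hexj
      have hrj : IsUnit (r j) := by
        by_contra hnu
        have h1 : r j ∈ IsLocalRing.maximalIdeal R := hnu
        rw [hπ, Ideal.submodule_span_eq] at h1
        obtain ⟨cc, hcc⟩ := Ideal.mem_span_singleton'.1 h1
        refine hj ((hmpow (s+1)) ▸ Ideal.mem_span_singleton'.2 ⟨cc, ?_⟩)
        rw [pow_succ]
        linear_combination (π ^ s) * hcc + hr j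
      obtain ⟨tinv, htinv⟩ := hrj.exists_left_inv
      set E := pivEquiv j r tinv htinv with hE
      set W₁ := W.comap (E : (n → R) →ₗ[R] (n → R)) with hW₁def
      set f' : κ → (n → R) := fun i => E.symm (f i) with hf'def
      have hspan1 : Submodule.span R (Set.range f') = W₁ := by
        have h1 := span_range_comp_equiv E.symm f W hf
        rw [show Set.range (⇑E.symm ∘ f) = Set.range f' from rfl] at h1
        rw [h1, ← Submodule.comap_equiv_eq_map_symm]
      have hwE : E ((π ^ s) • (Pi.single j (1:R) : n → R)) = w := by
        rw [map_smul, pivEquiv_single]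
        funext i
        simp only [Pi.smul_apply, smul_eq_mul]
        rw [← hr i]; ring
      set v : n → R := (π ^ s) • (Pi.single j (1:R) : n → R) with hvdef
      have hvW₁ : v ∈ W₁ := by
        rw [hW₁def, Submodule.mem_comap]
        show E v ∈ W
        rw [hvdef, hwE]; exact hwW
      have hW₁s : W₁ ≤ (IsLocalRing.maximalIdeal R ^ s • ⊤ : Submodule R (n → R)) := by
        intro x hx
        have h1 : (IsLocalRing.maximalIdeal R ^ s • ⊤ : Submodule R (n → R)).comap
            (E : (n → R) →ₗ[R] (n → R)) = (IsLocalRing.maximalIdeal R ^ s • ⊤ : Submodule R (n → R)) := by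
          rw [Submodule.comap_equiv_eq_map_symm, Submodule.map_smul'']
          simp
        rw [← h1]
        exact Submodule.mem_comap.2 (hWs (Submodule.mem_comap.1 hx))
      have hf'W₁ : ∀ i, f' i ∈ W₁ := fun i =>
        hspan1 ▸ Submodule.subset_span (Set.mem_range_self i)
      choose d hd using fun i =>
        Ideal.mem_span_singleton'.1 ((hmpow s) ▸ (mem_smul_top_pi.1 (hW₁s (hf'W₁ i)) j))
      set y : κ → (n → R) := fun i => f' i - d i • v with hydef
      have hyj : ∀ i, y i j = 0 := by
        intro i
        simp only [hydef, hvdef, Pi.sub_apply, Pi.smul_apply, Pi.single_eq_same, smul_eq_mul,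
          mul_one]
        rw [← hd i]; ring
      have hyW₁ : ∀ i, y i ∈ W₁ := fun i =>
        Submodule.sub_mem _ (hf'W₁ i) (Submodule.smul_mem _ _ hvW₁)
      have hf'i₀ : f' i₀ = v := by
        rw [hf'def]
        show E.symm (f i₀) = v
        rw [← hwdef, ← hwE, LinearEquiv.symm_apply_apply]
      have hyi₀ : y i₀ = 0 := by
        have hd₀ : d i₀ * π ^ s = π ^ s := by
          have := hd i₀
          rw [hf'i₀, hvdef] at this
          simpa using this
        simp only [hydef, hf'i₀, hvdef, smul_smul, hd₀]
        simp
      have hdecomp : W₁ = (Submodule.span R {v}) ⊔ Submodule.span R (Set.range y) := by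
        apply le_antisymm
        · rw [← hspan1]
          apply Submodule.span_le.2
          rintro _ ⟨i, rfl⟩
          have h1 : f' i = y i + d i • v := by simp [hydef]
          rw [h1]
          exact Submodule.add_mem _
            (Submodule.mem_sup_right (Submodule.subset_span (Set.mem_range_self i)))
            (Submodule.smul_mem _ _ (Submodule.mem_sup_left (Submodule.subset_span rfl)))
        · apply sup_le
          · exact (Submodule.span_singleton_le_iff_mem _ _).2 hvW₁
          · exact Submodule.span_le.2 (by rintro _ ⟨i, rfl⟩; exact hyW₁ i)
      -- induction hypothesis on coordinates ≠ j
      have hcardn' : Fintype.card {i : n // i ≠ j} = N := by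
        have h1 : Fintype.card {i : n // i ≠ j} = Fintype.card n - 1 := by
          rw [Fintype.card_subtype_compl, Fintype.card_subtype_eq]
        omega
      set W'' := Submodule.span R
        (Set.range fun i' : {i : κ // i ≠ i₀} => restr j (y i'.1)) with hW''def
      obtain ⟨g', c', T', hWc', hT0', hTcard'⟩ :=
        IH {i : n // i ≠ j} hcardn' W'' {i : κ // i ≠ i₀} (fun i' => restr j (y i'.1)) rfl
      have hEy : ∀ i, extZero j (restr j (y i)) = y i := fun i => extZero_restr j _ (hyj i)
      have hmapW'' : (W''.map (extZero j)) = Submodule.span R (Set.range y) := by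
        rw [hW''def, Submodule.map_span, ← Set.range_comp]
        apply le_antisymm
        · apply Submodule.span_mono
          rintro _ ⟨i', rfl⟩
          exact ⟨i'.1, (hEy i'.1).symm⟩
        · apply Submodule.span_le.2
          rintro _ ⟨i, rfl⟩
          by_cases h : i = i₀
          · rw [h, hyi₀]; exact Submodule.zero_mem _
          · exact Submodule.subset_span ⟨⟨i, h⟩, hEy i⟩
      have hWmap : W = W₁.map (E : (n → R) →ₗ[R] (n → R)) := by
        rw [hW₁def, Submodule.map_comap_eq_of_surjective
          (f := (E : (n → R) →ₗ[R] (n → R))) E.surjective]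
      -- assemble the basis of n → R
      haveI : Unique {i : n // ¬ i ≠ j} :=
        ⟨⟨⟨j, not_not_intro rfl⟩⟩, fun x => Subtype.ext (not_not.1 x.2)⟩
      set Bfull : Module.Basis n R (n → R) :=
        ((g'.prod (Module.Basis.singleton {i : n // ¬ i ≠ j} R)).map
          ((splitEquiv j).trans E)).reindex (Equiv.sumCompl (fun i : n => i ≠ j)) with hBfull
      set c : n → R := fun i => if h : i ≠ j then c' ⟨i, h⟩ else π ^ s with hcdef
      have hBval_ne : ∀ (i : n) (h : i ≠ j), Bfull i = E (extZero j (g' ⟨i, h⟩)) := by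
        intro i h
        rw [hBfull, Module.Basis.reindex_apply,
          Equiv.sumCompl_symm_apply_of_pos (p := fun i : n => i ≠ j) h, Module.Basis.map_apply]
        have h2 : (g'.prod (Module.Basis.singleton {i : n // ¬ i ≠ j} R)) (Sum.inl ⟨i, h⟩)
            = (g' ⟨i, h⟩, 0) := by
          ext <;> simp [Module.Basis.prod_apply]
        rw [h2, LinearEquiv.trans_apply, splitEquiv_apply_fst]
      have hBval_j : Bfull j = E (Pi.single j (1 : R)) := by
        rw [hBfull, Module.Basis.reindex_apply,
          Equiv.sumCompl_symm_apply_of_neg (p := fun i : n => i ≠ j) (not_not_intro rfl),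
          Module.Basis.map_apply]
        have h2 : (g'.prod (Module.Basis.singleton {i : n // ¬ i ≠ j} R))
            (Sum.inr ⟨j, not_not_intro rfl⟩) = (0, 1) := by
          ext <;> simp [Module.Basis.prod_apply, Module.Basis.singleton_apply]
        rw [h2, LinearEquiv.trans_apply, splitEquiv_apply_snd, one_smul]
      have hBne : ∀ (i : n) (h : i ≠ j),
          c i • Bfull i = E (extZero j (c' ⟨i, h⟩ • g' ⟨i, h⟩)) := by
        intro i h
        rw [hBval_ne i h, hcdef]
        simp only [dif_pos h]
        rw [← map_smul, ← map_smul]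
      have hBj : c j • Bfull j = E v := by
        rw [hBval_j, hcdef]
        simp only [dif_neg (not_not_intro rfl)]
        rw [← map_smul, hvdef]
      refine ⟨Bfull, c, insert j (T'.image Subtype.val), ?_, ?_, ?_⟩
      · -- main spanning equality
        have hset : (Set.range fun i => c i • Bfull i)
            = {E v} ∪ (Set.range fun i' : {i : n // i ≠ j} =>
                E (extZero j (c' i' • g' i'))) := by
          apply Set.Subset.antisymm
          · rintro _ ⟨i, rfl⟩
            by_cases h : i ≠ j
            · exact Or.inr ⟨⟨i, h⟩, (hBne i h).symm⟩
            · rw [not_not.1 h]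
              exact Or.inl hBj
          · rintro z (hz | ⟨i', rfl⟩)
            · exact ⟨j, by show c j • Bfull j = z; rw [hBj, Set.mem_singleton_iff.1 hz]⟩
            · exact ⟨i'.1, by
                show c i'.1 • Bfull i'.1 = _
                rw [hBne i'.1 i'.2, Subtype.coe_eta]⟩
        rw [hset, Submodule.span_union, hWmap, hdecomp, Submodule.map_sup]
        congr 1
        · rw [Submodule.map_span, Set.image_singleton]
          rfl
        · rw [← hmapW'', hWc', Submodule.map_span, ← Set.range_comp,
            Submodule.map_span, ← Set.range_comp]
          rfl
      · intro i hi
        simp only [hcdef]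
        split_ifs with h
        · refine hT0' ⟨i, h⟩ fun hmem => hi ?_
          exact Finset.mem_insert.2 (Or.inr (Finset.mem_image.2 ⟨⟨i, h⟩, hmem, rfl⟩))
        · exfalso
          have h1 : i = j := not_not.1 h
          subst h1
          exact hi (Finset.mem_insert_self i _)
      · haveI : Nonempty κ := ⟨i₀⟩
        have h1 : Fintype.card {i : κ // i ≠ i₀} = Fintype.card κ - 1 := by
          rw [Fintype.card_subtype_compl, Fintype.card_subtype_eq]
        have h2 : 0 < Fintype.card κ := Fintype.card_pos
        have h3 := Finset.card_insert_le j (T'.image Subtype.val)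
        have h4 := Finset.card_image_le (s := T') (f := Subtype.val)
        omega


end big

/-- Let `R` be a finite commutative chain ring, `V` a free `R`-module of
rank `a`, and `W` a submodule of `V` of rank `b`.  For any integer `u` with `b ≤ u ≤ a`,
there exists a free `R`-submodule `F` of `V` of rank `u` such that `W ⊆ F`. -/
theorem exists_free_submodule_of_rank_containing
    (R : Type*) [CommRing R] [Finite R] [IsLocalRing R] [IsPrincipalIdealRing R]
    (V : Type*) [AddCommGroup V] [Module R V]
    (a : ℕ) (hV : Nonempty (V ≃ₗ[R] (Fin a → R)))
    (W : Submodule R V) (b : ℕ) (hW : subrank W = b)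
    (u : ℕ) (hbu : b ≤ u) (hua : u ≤ a) :
    ∃ F : Submodule R V, W ≤ F ∧ Module.Free R ↥F ∧ subrank F = u := by
  classical
  obtain ⟨eV⟩ := hV
  haveI : Finite V := Finite.of_equiv _ eV.symm.toEquiv
  -- a spanning family of W of size b
  haveI : Fintype ↥W := Fintype.ofFinite _
  have hSne : ∃ k, ∃ f : Fin k → V, Submodule.span R (Set.range f) = W := by
    refine ⟨Fintype.card ↥W, Subtype.val ∘ ⇑(Fintype.equivFin ↥W).symm, ?_⟩
    rw [Set.range_comp, Set.range_eq_univ.2 (Fintype.equivFin ↥W).symm.surjective,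
      Set.image_univ, Subtype.range_coe, Submodule.span_eq]
  have hbmem : ∃ f : Fin b → V, Submodule.span R (Set.range f) = W := by
    have := Nat.sInf_mem (s := {k | ∃ f : Fin k → V, Submodule.span R (Set.range f) = W}) hSne
    rwa [show sInf {k | ∃ f : Fin k → V, Submodule.span R (Set.range f) = W} = b from hW] at this
  obtain ⟨f, hf⟩ := hbmem
  set W₀ := W.map (eV : V →ₗ[R] (Fin a → R)) with hW₀def
  have hf₀ : Submodule.span R (Set.range (⇑eV ∘ f)) = W₀ := span_range_comp_equiv eV f W hf
  obtain ⟨g, c, T, hWc, hT0, hTcard⟩ :=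
    smith_aux R a (Fin a) (by simp) W₀ (Fin b) (⇑eV ∘ f) hf₀
  have hTu : T.card ≤ u := le_trans (hTcard.trans (by simp)) hbu
  obtain ⟨U, hTU, -, hUcard⟩ :=
    Finset.exists_subsuperset_card_eq (t := Finset.univ) (Finset.subset_univ T) hTu
      (by simpa using hua)
  set F₀ := Submodule.span R (Set.range (⇑g ∘ (Subtype.val : ↥U → Fin a))) with hF₀def
  have hWF₀ : W₀ ≤ F₀ := by
    rw [hWc]
    apply Submodule.span_le.2
    rintro _ ⟨i, rfl⟩
    show c i • g i ∈ F₀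
    by_cases hi : i ∈ T
    · exact Submodule.smul_mem _ _ (Submodule.subset_span ⟨⟨i, hTU hi⟩, rfl⟩)
    · rw [hT0 i hi, zero_smul]
      exact Submodule.zero_mem _
  have BF₀ : Module.Basis ↥U R ↥F₀ :=
    Module.Basis.span (g.linearIndependent.comp _ Subtype.val_injective)
  have hsubF₀ : subrank F₀ = u := by
    rw [subrank_eq_card_of_basis F₀ BF₀, Fintype.card_coe, hUcard]
  refine ⟨F₀.map (eV.symm : (Fin a → R) →ₗ[R] V), ?_, ?_, ?_⟩
  · have h1 : W = (W₀).map (eV.symm : (Fin a → R) →ₗ[R] V) := (map_map_symm eV W).symm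
    rw [h1]
    exact Submodule.map_mono hWF₀
  · exact Module.Free.of_basis (BF₀.map (eV.symm.submoduleMap F₀))
  · rw [subrank_map_equiv eV.symm F₀, hsubF₀]
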